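/- Conditional (product) decomposition of the multivariate deformed Pólya distribution: let 0 < τ₂ < τ₁ be reals, let m be a nonzero integer, let n, k be naturals with k ≥ 1, let 1 ≤ μ < k, and let β₁, …, β_k, β be reals. Let (y₁,…,y_k) be naturals with y₁ + ⋯ + y_k ≤ n, and set x_μ = y₁ + ⋯ + y_μ and β' = β − (β₁ + ⋯ + β_μ). Then the k-variate deformed Pólya mass factors as P_{n,β,m}(y₁,…,y_k) = P'_{n,β,m}(y₁,…,y_μ) · Q(y_{μ+1},…,y_k), where P' is the μ-variate deformed Pólya mass with parameters n, (β₁,…,β_μ), β, m, and Q is the (k−μ)-variate deformed Pólya mass with parameters n − x_μ, (β_{μ+1},…,β_k), β', m; here one assumes β is not equal to any of 0, 1, …, n−1 and β' is not equal to any of 0, 1, …, n − x_μ − 1 (so that the masses are well defined). In particular, the conditional distribution of the last k−μ coordinates given the first μ coordinates is a (k−μ)-variate deformed Pólya distribution. -/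
import Mathlib


open Finset

noncomputable def dnum (τ₁ τ₂ x : ℝ) : ℝ := (τ₁ ^ x - τ₂ ^ x) / (τ₁ - τ₂)

noncomputable def dfac (τ₁ τ₂ : ℝ) (r : ℕ) : ℝ :=
  ∏ j ∈ Finset.range r, dnum τ₁ τ₂ ((j : ℝ) + 1)

noncomputable def dfall (τ₁ τ₂ x : ℝ) (r : ℕ) : ℝ :=
  ∏ i ∈ Finset.range r, dnum τ₁ τ₂ (x - (i : ℝ))

noncomputable def dbinom (τ₁ τ₂ x : ℝ) (r : ℕ) : ℝ := dfall τ₁ τ₂ x r / dfac τ₁ τ₂ r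

noncomputable def dmulti (τ₁ τ₂ x : ℝ) {k : ℕ} (r : Fin k → ℕ) : ℝ :=
  dfall τ₁ τ₂ x (∑ j, r j) / ∏ j, dfac τ₁ τ₂ (r j)

/-- The `k`-variate deformed Pólya mass with parameters `n`, `(β₁,…,β_k)`, `β`
and nonzero integer `m`, built from `σ = (τ₁^{−m}, τ₂^{−m})`: for a tuple
`(y₁,…,y_k)` with `y₁+⋯+y_k ≤ n`, writing `y_{k+1} = n − (y₁+⋯+y_k)`,
`β_{k+1} = β − (β₁+⋯+β_k)` and `x_j = y₁+⋯+y_j`, it equals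
`τ₁^{−m Σ_j x_j(β_{j+1}−y_{j+1})} τ₂^{−m Σ_j (n−x_j)(β_j−y_j)}
  M_σ(n; y₁,…,y_k) (Π_{j=1}^{k+1} [β_j]_{y_j,σ}) / [β]_{n,σ}`. -/
noncomputable def polyaMass (τ₁ τ₂ : ℝ) (m : ℤ) (n : ℕ) {k : ℕ}
    (βv : Fin k → ℝ) (β : ℝ) (y : Fin k → ℕ) : ℝ :=
  let σ₁ : ℝ := τ₁ ^ (-m)
  let σ₂ : ℝ := τ₂ ^ (-m)
  let Y : Fin (k + 1) → ℕ := Fin.snoc y (n - ∑ j, y j)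
  let B : Fin (k + 1) → ℝ := Fin.snoc βv (β - ∑ j, βv j)
  let X : Fin k → ℕ := fun j => ∑ i ∈ Finset.Iic j, y i
  τ₁ ^ (-(m : ℝ) * ∑ j : Fin k, (X j : ℝ) * (B j.succ - (Y j.succ : ℝ))) *
    τ₂ ^ (-(m : ℝ) * ∑ j : Fin k, ((n : ℝ) - (X j : ℝ)) * (βv j - (y j : ℝ))) *
    dmulti σ₁ σ₂ (n : ℝ) y *
    (∏ j : Fin (k + 1), dfall σ₁ σ₂ (B j) (Y j)) / dfall σ₁ σ₂ β n

lemma dnum_ne_zero {σ₁ σ₂ x : ℝ} (h1 : 0 < σ₁) (h2 : 0 < σ₂) (hne : σ₁ ≠ σ₂) (hx : x ≠ 0) :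
    dnum σ₁ σ₂ x ≠ 0 := by
  unfold dnum
  apply div_ne_zero _ (sub_ne_zero.mpr hne)
  intro h
  have h' : σ₁ ^ x = σ₂ ^ x := sub_eq_zero.mp h
  have hlog : x * Real.log σ₁ = x * Real.log σ₂ := by
    rw [← Real.log_rpow h1, ← Real.log_rpow h2, h']
  have hl : Real.log σ₁ = Real.log σ₂ := mul_left_cancel₀ hx hlog
  exact hne (Real.log_injOn_pos (Set.mem_Ioi.mpr h1) (Set.mem_Ioi.mpr h2) hl)

lemma dfall_ne_zero {σ₁ σ₂ : ℝ} (h1 : 0 < σ₁) (h2 : 0 < σ₂) (hne : σ₁ ≠ σ₂) {x : ℝ} {r : ℕ}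
    (hx : ∀ i : ℕ, i < r → x ≠ i) : dfall σ₁ σ₂ x r ≠ 0 := by
  unfold dfall
  rw [Finset.prod_ne_zero_iff]
  intro i hi
  exact dnum_ne_zero h1 h2 hne (sub_ne_zero.mpr (hx i (Finset.mem_range.mp hi)))

lemma dfall_add (σ₁ σ₂ x : ℝ) (a b : ℕ) :
    dfall σ₁ σ₂ x (a + b) = dfall σ₁ σ₂ x a * dfall σ₁ σ₂ (x - a) b := by
  unfold dfall
  rw [Finset.prod_range_add]
  congr 1
  refine Finset.prod_congr rfl fun i _ => ?_
  congr 1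
  push_cast
  ring

lemma Iic_sum_eq {k : ℕ} (j : Fin k) (f : Fin k → ℕ) (g : ℕ → ℕ) (h : ∀ i : Fin k, f i = g i) :
    ∑ i ∈ Finset.Iic j, f i = ∑ i ∈ Finset.range (j.val + 1), g i := by
  have hr : Finset.range (j.val + 1) = Finset.Iic (j : ℕ) := by
    ext i; simp [Nat.lt_succ_iff]
  rw [hr, ← Fin.map_valEmbedding_Iic, Finset.sum_map]
  exact Finset.sum_congr rfl fun i _ => h i

noncomputable def bext {k : ℕ} (βv : Fin k → ℝ) (β : ℝ) : ℕ → ℝ :=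
  fun i => if h : i < k then βv ⟨i, h⟩ else β - ∑ j, βv j

def wext {k : ℕ} (y : Fin k → ℕ) (n : ℕ) : ℕ → ℕ :=
  fun i => if h : i < k then y ⟨i, h⟩ else n - ∑ j, y j

lemma snoc_eq_dite {α : Type*} {k : ℕ} (f : Fin k → α) (c : α) (j : Fin (k + 1)) :
    (Fin.snoc f c : Fin (k + 1) → α) j = if h : j.val < k then f ⟨j.val, h⟩ else c := by
  simp only [Fin.snoc, Fin.castLT]
  split <;> rfl

lemma polyaMass_eq (τ₁ τ₂ : ℝ) (m : ℤ) (n : ℕ) {k : ℕ} (βv : Fin k → ℝ) (β : ℝ)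
    (y : Fin k → ℕ) :
    polyaMass τ₁ τ₂ m n βv β y =
      τ₁ ^ (-(m : ℝ) * ∑ j ∈ range k,
          ((∑ i ∈ range (j + 1), wext y n i : ℕ) : ℝ) *
            (bext βv β (j + 1) - (wext y n (j + 1) : ℝ))) *
        τ₂ ^ (-(m : ℝ) * ∑ j ∈ range k,
          ((n : ℝ) - ((∑ i ∈ range (j + 1), wext y n i : ℕ) : ℝ)) *
            (bext βv β j - (wext y n j : ℝ))) *
        (dfall (τ₁ ^ (-m)) (τ₂ ^ (-m)) (n : ℝ) (∑ i ∈ range k, wext y n i) /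
          ∏ i ∈ range k, dfac (τ₁ ^ (-m)) (τ₂ ^ (-m)) (wext y n i)) *
        (∏ i ∈ range (k + 1), dfall (τ₁ ^ (-m)) (τ₂ ^ (-m)) (bext βv β i) (wext y n i)) /
        dfall (τ₁ ^ (-m)) (τ₂ ^ (-m)) β n := by
  have hw : ∀ j : Fin k, y j = wext y n j.val := fun j => by simp [wext, j.isLt]
  have hb : ∀ j : Fin k, βv j = bext βv β j.val := fun j => by simp [bext, j.isLt]
  have hY : ∀ j : Fin (k + 1),
      (Fin.snoc y (n - ∑ j, y j) : Fin (k + 1) → ℕ) j = wext y n j.val := fun j =>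
    snoc_eq_dite y _ j
  have hB : ∀ j : Fin (k + 1),
      (Fin.snoc βv (β - ∑ j, βv j) : Fin (k + 1) → ℝ) j = bext βv β j.val := fun j =>
    snoc_eq_dite βv _ j
  have hX : ∀ j : Fin k,
      (∑ i ∈ Finset.Iic j, y i) = ∑ i ∈ range (j.val + 1), wext y n i := fun j =>
    Iic_sum_eq j y (wext y n) hw
  simp only [polyaMass, dmulti]
  have e0 : (∑ j : Fin k, y j) = ∑ i ∈ range k, wext y n i := by
    rw [← Fin.sum_univ_eq_sum_range (wext y n) k]
    exact Finset.sum_congr rfl fun j _ => hw j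
  have e0' : (∏ j : Fin k, dfac (τ₁ ^ (-m)) (τ₂ ^ (-m)) (y j)) =
      ∏ i ∈ range k, dfac (τ₁ ^ (-m)) (τ₂ ^ (-m)) (wext y n i) := by
    rw [← Fin.prod_univ_eq_prod_range]
    exact Finset.prod_congr rfl fun j _ => by rw [hw j]
  have e1 : (∑ j : Fin k, ((∑ i ∈ Finset.Iic j, y i : ℕ) : ℝ) *
        ((Fin.snoc βv (β - ∑ j, βv j) : Fin (k + 1) → ℝ) j.succ -
          ((Fin.snoc y (n - ∑ j, y j) : Fin (k + 1) → ℕ) j.succ : ℝ))) =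
      ∑ j ∈ range k, ((∑ i ∈ range (j + 1), wext y n i : ℕ) : ℝ) *
        (bext βv β (j + 1) - (wext y n (j + 1) : ℝ)) := by
    rw [← Fin.sum_univ_eq_sum_range
      (fun t => ((∑ i ∈ range (t + 1), wext y n i : ℕ) : ℝ) *
        (bext βv β (t + 1) - (wext y n (t + 1) : ℝ))) k]
    refine Finset.sum_congr rfl fun j _ => ?_
    rw [hX j, hB j.succ, hY j.succ, Fin.val_succ]
  have e2 : (∑ j : Fin k, ((n : ℝ) - ((∑ i ∈ Finset.Iic j, y i : ℕ) : ℝ)) *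
        (βv j - (y j : ℝ))) =
      ∑ j ∈ range k, ((n : ℝ) - ((∑ i ∈ range (j + 1), wext y n i : ℕ) : ℝ)) *
        (bext βv β j - (wext y n j : ℝ)) := by
    rw [← Fin.sum_univ_eq_sum_range
      (fun t => ((n : ℝ) - ((∑ i ∈ range (t + 1), wext y n i : ℕ) : ℝ)) *
        (bext βv β t - (wext y n t : ℝ))) k]
    refine Finset.sum_congr rfl fun j _ => ?_
    rw [hX j, hb j, hw j]
  have e3 : (∏ j : Fin (k + 1), dfall (τ₁ ^ (-m)) (τ₂ ^ (-m))
        ((Fin.snoc βv (β - ∑ j, βv j) : Fin (k + 1) → ℝ) j)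
        ((Fin.snoc y (n - ∑ j, y j) : Fin (k + 1) → ℕ) j)) =
      ∏ i ∈ range (k + 1), dfall (τ₁ ^ (-m)) (τ₂ ^ (-m)) (bext βv β i) (wext y n i) := by
    rw [← Fin.prod_univ_eq_prod_range]
    exact Finset.prod_congr rfl fun j _ => by rw [hB j, hY j]
  rw [e1, e2, e3, e0, e0']

lemma sum_range_split {M : Type*} [AddCommMonoid M] (f : ℕ → M) {μ k : ℕ} (h : μ ≤ k) :
    ∑ i ∈ Finset.range k, f i =
      (∑ i ∈ Finset.range μ, f i) + ∑ i ∈ Finset.range (k - μ), f (μ + i) := by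
  rw [← Finset.sum_range_add, Nat.add_sub_cancel' h]

lemma prod_range_split {M : Type*} [CommMonoid M] (f : ℕ → M) {μ k : ℕ} (h : μ ≤ k) :
    ∏ i ∈ Finset.range k, f i =
      (∏ i ∈ Finset.range μ, f i) * ∏ i ∈ Finset.range (k - μ), f (μ + i) := by
  rw [← Finset.prod_range_add, Nat.add_sub_cancel' h]

lemma sum_range_peel {M : Type*} [AddCommMonoid M] (f : ℕ → M) {μ : ℕ} (h : 1 ≤ μ) :
    ∑ i ∈ Finset.range μ, f i = (∑ i ∈ Finset.range (μ - 1), f i) + f (μ - 1) := by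
  conv_lhs => rw [show μ = (μ - 1) + 1 by omega]
  rw [Finset.sum_range_succ]

lemma dfac_ne_zero {σ₁ σ₂ : ℝ} (h1 : 0 < σ₁) (h2 : 0 < σ₂) (hne : σ₁ ≠ σ₂) (r : ℕ) :
    dfac σ₁ σ₂ r ≠ 0 := by
  unfold dfac
  rw [Finset.prod_ne_zero_iff]
  intro i _
  exact dnum_ne_zero h1 h2 hne (by positivity)

set_option maxHeartbeats 2000000 in
/-- Conditional (product) decomposition of the multivariate deformed Pólya
distribution: for `1 ≤ μ < k`, `y₁+⋯+y_k ≤ n`, with `x_μ = y₁+⋯+y_μ` and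
`β' = β − (β₁+⋯+β_μ)`, assuming `β` avoids `0,…,n−1` and `β'` avoids
`0,…,n−x_μ−1`, the `k`-variate mass factors as
`P_{n,β,m}(y₁,…,y_k) = P'_{n,β,m}(y₁,…,y_μ) · Q(y_{μ+1},…,y_k)`,
where `P'` is the `μ`-variate mass with parameters `n, (β₁,…,β_μ), β, m` and
`Q` is the `(k−μ)`-variate mass with parameters `n−x_μ, (β_{μ+1},…,β_k), β', m`. -/

theorem deformed_polya_conditional
    (τ₁ τ₂ : ℝ) (hτ₂ : 0 < τ₂) (hττ : τ₂ < τ₁) (m : ℤ) (hm : m ≠ 0)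
    (n k μ : ℕ) (hμ : 1 ≤ μ) (hμk : μ < k)
    (βv : Fin k → ℝ) (β : ℝ)
    (y : Fin k → ℕ) (hy : ∑ j, y j ≤ n)
    (hβ : ∀ i : ℕ, i < n → β ≠ i)
    (hβ' : ∀ i : ℕ, i < n - ∑ j : Fin μ, y (Fin.castLE hμk.le j) →
      β - ∑ j : Fin μ, βv (Fin.castLE hμk.le j) ≠ i) :
    polyaMass τ₁ τ₂ m n βv β y =
      polyaMass τ₁ τ₂ m n (fun j : Fin μ => βv (Fin.castLE hμk.le j)) β
          (fun j : Fin μ => y (Fin.castLE hμk.le j)) *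
        polyaMass τ₁ τ₂ m (n - ∑ j : Fin μ, y (Fin.castLE hμk.le j))
          (fun j : Fin (k - μ) => βv ⟨μ + (j : ℕ), by have := j.isLt; omega⟩)
          (β - ∑ j : Fin μ, βv (Fin.castLE hμk.le j))
          (fun j : Fin (k - μ) => y ⟨μ + (j : ℕ), by have := j.isLt; omega⟩) := by
  have hτ₁ : 0 < τ₁ := hτ₂.trans hττ
  have hσ₁ : (0:ℝ) < τ₁ ^ (-m) := zpow_pos hτ₁ _
  have hσ₂ : (0:ℝ) < τ₂ ^ (-m) := zpow_pos hτ₂ _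
  have hσne : τ₁ ^ (-m) ≠ τ₂ ^ (-m) := by
    intro h
    have h1 : ((-m : ℤ) : ℝ) * Real.log τ₁ = ((-m : ℤ) : ℝ) * Real.log τ₂ := by
      rw [← Real.log_zpow, ← Real.log_zpow, h]
    have hm' : ((-m : ℤ) : ℝ) ≠ 0 := by
      exact_mod_cast neg_ne_zero.mpr hm
    have h2 : Real.log τ₁ = Real.log τ₂ := mul_left_cancel₀ hm' h1
    have h3 := Real.log_injOn_pos (Set.mem_Ioi.mpr hτ₁) (Set.mem_Ioi.mpr hτ₂) h2
    linarith
  set s := ∑ j : Fin μ, y (Fin.castLE hμk.le j) with hs_def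
  set βs := ∑ j : Fin μ, βv (Fin.castLE hμk.le j) with hβs_def
  rw [polyaMass_eq, polyaMass_eq, polyaMass_eq]
  set w := wext y n with hw_def
  set b := bext βv β with hb_def
  set w1 := wext (fun j : Fin μ => y (Fin.castLE hμk.le j)) n with hw1_def
  set b1 := bext (fun j : Fin μ => βv (Fin.castLE hμk.le j)) β with hb1_def
  set w2 := wext (fun j : Fin (k - μ) => y ⟨μ + (j : ℕ), by have := j.isLt; omega⟩) (n - s)
    with hw2_def
  set b2 := bext (fun j : Fin (k - μ) => βv ⟨μ + (j : ℕ), by have := j.isLt; omega⟩) (β - βs)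
    with hb2_def
  -- pointwise evaluations
  have hwlt : ∀ i (h : i < k), w i = y ⟨i, h⟩ := fun i h => by simp [hw_def, wext, h]
  have hblt : ∀ i (h : i < k), b i = βv ⟨i, h⟩ := fun i h => by simp [hb_def, bext, h]
  have hSw : ∑ j : Fin k, y j = ∑ i ∈ range k, w i := by
    rw [← Fin.sum_univ_eq_sum_range (fun i => w i) k]
    exact Finset.sum_congr rfl fun j _ => by rw [hwlt j.val j.isLt]
  have hsw : s = ∑ i ∈ range μ, w i := by
    rw [hs_def, ← Fin.sum_univ_eq_sum_range (fun i => w i) μ]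
    refine Finset.sum_congr rfl fun j _ => ?_
    rw [hwlt j.val (lt_of_lt_of_le j.isLt hμk.le)]
    rfl
  have hβsw : βs = ∑ i ∈ range μ, b i := by
    rw [hβs_def, ← Fin.sum_univ_eq_sum_range (fun i => b i) μ]
    refine Finset.sum_congr rfl fun j _ => ?_
    rw [hblt j.val (lt_of_lt_of_le j.isLt hμk.le)]
    rfl
  have hSb : ∑ j : Fin k, βv j = ∑ i ∈ range k, b i := by
    rw [← Fin.sum_univ_eq_sum_range (fun i => b i) k]
    exact Finset.sum_congr rfl fun j _ => by rw [hblt j.val j.isLt]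
  have hw1lt : ∀ i, i < μ → w1 i = w i := by
    intro i h
    rw [hw1_def, hwlt i (h.trans hμk)]
    simp [wext, h]
  have hw1top : w1 μ = n - s := by
    simp [hw1_def, wext, hs_def]
  have hb1lt : ∀ i, i < μ → b1 i = b i := by
    intro i h
    rw [hb1_def, hblt i (h.trans hμk)]
    simp [bext, h]
  have hb1top : b1 μ = β - βs := by
    simp [hb1_def, bext, hβs_def]
  have hw2lt : ∀ i, i < k - μ → w2 i = w (μ + i) := by
    intro i h
    rw [hw2_def, hwlt (μ + i) (by omega)]
    simp [wext, h]
  have hb2lt : ∀ i, i < k - μ → b2 i = b (μ + i) := by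
    intro i h
    rw [hb2_def, hblt (μ + i) (by omega)]
    simp [bext, h]
  have hy2sum : (∑ j : Fin (k - μ), y ⟨μ + (j : ℕ), by have := j.isLt; omega⟩)
      = ∑ i ∈ range (k - μ), w (μ + i) := by
    rw [← Fin.sum_univ_eq_sum_range (fun i => w (μ + i)) (k - μ)]
    refine Finset.sum_congr rfl fun j _ => ?_
    rw [hwlt (μ + j.val) (by omega)]
  have hb2sum : (∑ j : Fin (k - μ), βv ⟨μ + (j : ℕ), by have := j.isLt; omega⟩)
      = ∑ i ∈ range (k - μ), b (μ + i) := by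
    rw [← Fin.sum_univ_eq_sum_range (fun i => b (μ + i)) (k - μ)]
    refine Finset.sum_congr rfl fun j _ => ?_
    rw [hblt (μ + j.val) (by omega)]
  have hT : ∑ i ∈ range k, w i = s + ∑ i ∈ range (k - μ), w (μ + i) := by
    rw [sum_range_split w hμk.le, hsw]
  have hTb : ∑ i ∈ range k, b i = βs + ∑ i ∈ range (k - μ), b (μ + i) := by
    rw [sum_range_split b hμk.le, hβsw]
  have hSn : ∑ i ∈ range k, w i ≤ n := by rw [← hSw]; exact hy
  have hsn : s ≤ n := by omega
  have hwtop : ∀ i, k ≤ i → w i = n - ∑ i ∈ range k, w i := by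
    intro i h
    have h1 : w i = n - ∑ j : Fin k, y j := by simp [hw_def, wext, Nat.not_lt.mpr h]
    rw [h1, hSw]
  have hbtop : ∀ i, k ≤ i → b i = β - ∑ i ∈ range k, b i := by
    intro i h
    have h1 : b i = β - ∑ j : Fin k, βv j := by simp [hb_def, bext, Nat.not_lt.mpr h]
    rw [h1, hSb]
  have hw2top : ∀ i, k - μ ≤ i → w2 i = n - ∑ i ∈ range k, w i := by
    intro i h
    rw [hw2_def]
    simp only [wext, dif_neg (Nat.not_lt.mpr h)]
    rw [hy2sum]
    omega
  have hb2top : ∀ i, k - μ ≤ i → b2 i = β - ∑ i ∈ range k, b i := by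
    intro i h
    rw [hb2_def]
    simp only [bext, dif_neg (Nat.not_lt.mpr h)]
    rw [hb2sum]
    rw [hTb]
    ring
  have hw2all : ∀ i, i ≤ k - μ → w2 i = w (μ + i) := by
    intro i hi
    rcases Nat.lt_or_ge i (k - μ) with h | h
    · exact hw2lt i h
    · rw [hw2top i h, hwtop (μ + i) (by omega)]
  have hb2all : ∀ i, i ≤ k - μ → b2 i = b (μ + i) := by
    intro i hi
    rcases Nat.lt_or_ge i (k - μ) with h | h
    · exact hb2lt i h
    · rw [hb2top i h, hbtop (μ + i) (by omega)]
  -- partial sums in the shifted block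
  have hps : ∀ j, j < k - μ → ∑ i ∈ range (μ + j + 1), w i = s + ∑ i ∈ range (j + 1), w2 i := by
    intro j hj
    rw [sum_range_split w (show μ ≤ μ + j + 1 by omega),
      show μ + j + 1 - μ = j + 1 from by omega, ← hsw]
    congr 1
    exact Finset.sum_congr rfl fun i hi => ((hw2lt i (by
      rw [Finset.mem_range] at hi; omega)).symm)
  -- E2 split
  have hE2 : (∑ j ∈ range k, ((n:ℝ) - (↑(∑ i ∈ range (j + 1), w i) : ℝ)) * (b j - (w j : ℝ)))
      = (∑ j ∈ range μ, ((n:ℝ) - (↑(∑ i ∈ range (j + 1), w1 i) : ℝ)) * (b1 j - (w1 j : ℝ)))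
        + ∑ j ∈ range (k - μ),
            (((n - s : ℕ) : ℝ) - (↑(∑ i ∈ range (j + 1), w2 i) : ℝ)) * (b2 j - (w2 j : ℝ)) := by
    rw [sum_range_split
      (fun j => ((n:ℝ) - (↑(∑ i ∈ range (j + 1), w i) : ℝ)) * (b j - (w j : ℝ))) hμk.le]
    congr 1
    · refine Finset.sum_congr rfl fun j hj => ?_
      rw [Finset.mem_range] at hj
      have hps1 : ∑ i ∈ range (j + 1), w1 i = ∑ i ∈ range (j + 1), w i :=
        Finset.sum_congr rfl fun i hi => hw1lt i (by rw [Finset.mem_range] at hi; omega)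
      rw [hps1, hw1lt j hj, hb1lt j hj]
    · refine Finset.sum_congr rfl fun j hj => ?_
      rw [Finset.mem_range] at hj
      rw [hps j hj, hb2lt j hj, hw2lt j hj, Nat.cast_sub hsn]
      push_cast
      ring
  -- E1 split
  have hb2succ : ∀ j, j < k - μ → b2 (j + 1) = b (μ + j + 1) := by
    intro j hj
    rw [hb2all (j + 1) (by omega), show μ + (j + 1) = μ + j + 1 from by omega]
  have hw2succ : ∀ j, j < k - μ → w2 (j + 1) = w (μ + j + 1) := by
    intro j hj
    rw [hw2all (j + 1) (by omega), show μ + (j + 1) = μ + j + 1 from by omega]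
  have hw1sum : ∑ i ∈ range μ, w1 i = s := by
    rw [hsw]
    exact Finset.sum_congr rfl fun i hi => hw1lt i (by rw [Finset.mem_range] at hi; omega)
  have hE1 : (∑ j ∈ range k, (↑(∑ i ∈ range (j + 1), w i) : ℝ) * (b (j + 1) - (w (j + 1) : ℝ)))
      = (∑ j ∈ range μ, (↑(∑ i ∈ range (j + 1), w1 i) : ℝ) * (b1 (j + 1) - (w1 (j + 1) : ℝ)))
        + ∑ j ∈ range (k - μ),
            (↑(∑ i ∈ range (j + 1), w2 i) : ℝ) * (b2 (j + 1) - (w2 (j + 1) : ℝ)) := by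
    rw [sum_range_split
      (fun j => (↑(∑ i ∈ range (j + 1), w i) : ℝ) * (b (j + 1) - (w (j + 1) : ℝ))) hμk.le]
    have hstep : ∀ j ∈ range (k - μ),
        (↑(∑ i ∈ range (μ + j + 1), w i) : ℝ) * (b (μ + j + 1) - (w (μ + j + 1) : ℝ))
          = (↑(∑ i ∈ range (j + 1), w2 i) : ℝ) * (b2 (j + 1) - (w2 (j + 1) : ℝ))
            + (s : ℝ) * (b (μ + j + 1) - (w (μ + j + 1) : ℝ)) := by
      intro j hj
      rw [Finset.mem_range] at hj
      rw [hps j hj, hb2succ j hj, hw2succ j hj]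
      push_cast
      ring
    rw [Finset.sum_congr rfl hstep, Finset.sum_add_distrib, ← Finset.mul_sum]
    have hC : (∑ j ∈ range (k - μ), (b (μ + j + 1) - (w (μ + j + 1) : ℝ)))
        = (β - n) - ((βs + b μ) - ((s : ℝ) + (w μ : ℝ))) := by
      have h1 : ∑ t ∈ range (k + 1), (b t - (w t : ℝ))
          = (∑ t ∈ range (μ + 1), (b t - (w t : ℝ)))
            + ∑ j ∈ range (k + 1 - (μ + 1)), (b (μ + 1 + j) - (w (μ + 1 + j) : ℝ)) :=
        sum_range_split _ (by omega)
      have h2 : k + 1 - (μ + 1) = k - μ := by omega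
      rw [h2] at h1
      have h3 : ∑ j ∈ range (k - μ), (b (μ + 1 + j) - (w (μ + 1 + j) : ℝ))
          = ∑ j ∈ range (k - μ), (b (μ + j + 1) - (w (μ + j + 1) : ℝ)) :=
        Finset.sum_congr rfl fun j _ => by rw [show μ + 1 + j = μ + j + 1 from by omega]
      rw [h3] at h1
      have h4 : ∑ t ∈ range (k + 1), (b t - (w t : ℝ)) = β - n := by
        rw [Finset.sum_sub_distrib]
        have hb4 : ∑ t ∈ range (k + 1), b t = β := by
          rw [Finset.sum_range_succ, hbtop k le_rfl]; ring
        have hw4 : ∑ t ∈ range (k + 1), ((w t : ℕ) : ℝ) = (n : ℝ) := by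
          have hw5 : ∑ t ∈ range (k + 1), w t = n := by
            rw [Finset.sum_range_succ, hwtop k le_rfl]; omega
          rw [← Nat.cast_sum, hw5]
        rw [hb4, hw4]
      have h5 : ∑ t ∈ range (μ + 1), (b t - (w t : ℝ))
          = (βs + b μ) - ((s : ℝ) + (w μ : ℝ)) := by
        rw [Finset.sum_range_succ]
        have h6 : ∑ t ∈ range μ, (b t - (w t : ℝ)) = βs - (s : ℝ) := by
          rw [Finset.sum_sub_distrib, ← Nat.cast_sum, ← hsw, ← hβsw]
        rw [h6]
        ring
      rw [h4, h5] at h1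
      linarith
    rw [hC]
    rw [sum_range_peel
      (fun j => (↑(∑ i ∈ range (j + 1), w i) : ℝ) * (b (j + 1) - (w (j + 1) : ℝ))) hμ]
    rw [sum_range_peel
      (fun j => (↑(∑ i ∈ range (j + 1), w1 i) : ℝ) * (b1 (j + 1) - (w1 (j + 1) : ℝ))) hμ]
    have hsmall :
        (∑ j ∈ range (μ - 1), (↑(∑ i ∈ range (j + 1), w1 i) : ℝ) * (b1 (j + 1) - (w1 (j + 1) : ℝ)))
        = ∑ j ∈ range (μ - 1), (↑(∑ i ∈ range (j + 1), w i) : ℝ) * (b (j + 1) - (w (j + 1) : ℝ)) := by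
      refine Finset.sum_congr rfl fun j hj => ?_
      rw [Finset.mem_range] at hj
      have hps1 : ∑ i ∈ range (j + 1), w1 i = ∑ i ∈ range (j + 1), w i :=
        Finset.sum_congr rfl fun i hi => hw1lt i (by rw [Finset.mem_range] at hi; omega)
      rw [hps1, hw1lt (j + 1) (by omega), hb1lt (j + 1) (by omega)]
    rw [hsmall, show μ - 1 + 1 = μ from by omega, hw1sum, hb1top, hw1top, ← hsw,
      Nat.cast_sub hsn]
    ring
  -- product splittings
  have hw2sum2 : ∑ i ∈ range (k - μ), w2 i = ∑ i ∈ range (k - μ), w (μ + i) :=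
    Finset.sum_congr rfl fun i hi => hw2lt i (by rw [Finset.mem_range] at hi; omega)
  have hMnum : dfall (τ₁ ^ (-m)) (τ₂ ^ (-m)) (n : ℝ) (∑ i ∈ range k, w i)
      = dfall (τ₁ ^ (-m)) (τ₂ ^ (-m)) (n : ℝ) (∑ i ∈ range μ, w1 i)
        * dfall (τ₁ ^ (-m)) (τ₂ ^ (-m)) ((n - s : ℕ) : ℝ) (∑ i ∈ range (k - μ), w2 i) := by
    rw [hw1sum, hw2sum2, hT, dfall_add, Nat.cast_sub hsn]
  have hMden : (∏ i ∈ range k, dfac (τ₁ ^ (-m)) (τ₂ ^ (-m)) (w i))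
      = (∏ i ∈ range μ, dfac (τ₁ ^ (-m)) (τ₂ ^ (-m)) (w1 i))
        * ∏ i ∈ range (k - μ), dfac (τ₁ ^ (-m)) (τ₂ ^ (-m)) (w2 i) := by
    rw [prod_range_split _ hμk.le]
    congr 1
    · exact Finset.prod_congr rfl fun i hi => by
        rw [hw1lt i (by rw [Finset.mem_range] at hi; omega)]
    · exact Finset.prod_congr rfl fun i hi => by
        rw [hw2lt i (by rw [Finset.mem_range] at hi; omega)]
  have hPsplit : (∏ i ∈ range (k + 1), dfall (τ₁ ^ (-m)) (τ₂ ^ (-m)) (b i) (w i))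
      = (∏ i ∈ range μ, dfall (τ₁ ^ (-m)) (τ₂ ^ (-m)) (b i) (w i))
        * ∏ i ∈ range (k + 1 - μ), dfall (τ₁ ^ (-m)) (τ₂ ^ (-m)) (b (μ + i)) (w (μ + i)) :=
    prod_range_split _ (by omega)
  have hP1 : (∏ i ∈ range (μ + 1), dfall (τ₁ ^ (-m)) (τ₂ ^ (-m)) (b1 i) (w1 i))
      = (∏ i ∈ range μ, dfall (τ₁ ^ (-m)) (τ₂ ^ (-m)) (b i) (w i))
        * dfall (τ₁ ^ (-m)) (τ₂ ^ (-m)) (β - βs) (n - s) := by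
    rw [Finset.prod_range_succ, hb1top, hw1top]
    congr 1
    refine Finset.prod_congr rfl fun i hi => ?_
    rw [Finset.mem_range] at hi
    rw [hb1lt i hi, hw1lt i hi]
  have hP2 : (∏ i ∈ range (k - μ + 1), dfall (τ₁ ^ (-m)) (τ₂ ^ (-m)) (b2 i) (w2 i))
      = ∏ i ∈ range (k + 1 - μ), dfall (τ₁ ^ (-m)) (τ₂ ^ (-m)) (b (μ + i)) (w (μ + i)) := by
    rw [show k + 1 - μ = k - μ + 1 from by omega]
    refine Finset.prod_congr rfl fun i hi => ?_
    rw [Finset.mem_range] at hi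
    rw [hb2all i (by omega), hw2all i (by omega)]
  have hD : dfall (τ₁ ^ (-m)) (τ₂ ^ (-m)) β n ≠ 0 := dfall_ne_zero hσ₁ hσ₂ hσne hβ
  have hD' : dfall (τ₁ ^ (-m)) (τ₂ ^ (-m)) (β - βs) (n - s) ≠ 0 :=
    dfall_ne_zero hσ₁ hσ₂ hσne hβ'
  have hPf1 : (∏ i ∈ range μ, dfac (τ₁ ^ (-m)) (τ₂ ^ (-m)) (w1 i)) ≠ 0 :=
    Finset.prod_ne_zero_iff.mpr fun i _ => dfac_ne_zero hσ₁ hσ₂ hσne _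
  have hPf2 : (∏ i ∈ range (k - μ), dfac (τ₁ ^ (-m)) (τ₂ ^ (-m)) (w2 i)) ≠ 0 :=
    Finset.prod_ne_zero_iff.mpr fun i _ => dfac_ne_zero hσ₁ hσ₂ hσne _
  rw [hE1, hE2, mul_add, mul_add, Real.rpow_add hτ₁, Real.rpow_add hτ₂, hMnum, hMden,
    hPsplit, hP1, hP2, div_mul_div_comm,
    div_eq_div_iff hD (mul_ne_zero hD hD')]
  ring
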